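/- Let M be a length-one ℤ[t]-module with 2ⁿ·M = 0 for some n. Then Ext¹_{ℤ[t]}(M, ℚ[t]/ℤ[t]) = 0; that is, every extension of ℤ[t]-modules 0 → ℚ[t]/ℤ[t] → E → M → 0 splits. -/

import Mathlib

noncomputable instance : Algebra (Polynomial ℤ) (Polynomial ℚ) :=
  (Polynomial.mapRingHom (Int.castRingHom ℚ)).toAlgebra

/-- The `ℤ[t]`-module `ℚ[t]/ℤ[t]`. -/
noncomputable abbrev QtZt : Type :=
  Polynomial ℚ ⧸ LinearMap.range (Algebra.linearMap (Polynomial ℤ) (Polynomial ℚ))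

/-- An `R`-module `M` has *length one* if there is a short exact sequence
`0 → F₁ → F₀ → M → 0` with `F₀`, `F₁` finitely generated free `R`-modules. -/
def IsLengthOne (R M : Type*) [CommRing R] [AddCommGroup M] [Module R M] : Prop :=
  ∃ (k l : ℕ) (f : (Fin k → R) →ₗ[R] (Fin l → R)) (g : (Fin l → R) →ₗ[R] M),
    Function.Injective f ∧ Function.Surjective g ∧ LinearMap.range f = LinearMap.ker g

/-- Let `M` be a length-one `ℤ[t]`-module with `2ⁿ • M = 0` for some `n`.  Then
`Ext¹_{ℤ[t]}(M, ℚ[t]/ℤ[t]) = 0`: every extension of `ℤ[t]`-modules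
`0 → ℚ[t]/ℤ[t] → E → M → 0` splits. -/
theorem ext_one_vanishes
    (M : Type) [AddCommGroup M] [Module (Polynomial ℤ) M]
    (n : ℕ) (hM : IsLengthOne (Polynomial ℤ) M)
    (hexp : ∀ x : M, (2 : Polynomial ℤ) ^ n • x = 0)
    (E : Type) [AddCommGroup E] [Module (Polynomial ℤ) E]
    (i : QtZt →ₗ[Polynomial ℤ] E) (p : E →ₗ[Polynomial ℤ] M)
    (hi : Function.Injective i) (hp : Function.Surjective p)
    (hexact : LinearMap.range i = LinearMap.ker p) :
    ∃ s : M →ₗ[Polynomial ℤ] E, p ∘ₗ s = LinearMap.id := by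
  classical
  set R := Polynomial ℤ
  obtain ⟨k, l, f, g, hf, hg, hfg⟩ := hM
  let b0 := Pi.basisFun R (Fin l)
  let b1 := Pi.basisFun R (Fin k)
  -- lift g along p
  choose e he using fun j => hp (g (b0 j))
  let h : (Fin l → R) →ₗ[R] E := b0.constr ℕ e
  have hph : ∀ x, p (h x) = g x := by
    intro x
    have : p ∘ₗ h = g := b0.ext fun j => by simp [h, he j]
    exact congrFun (congrArg DFunLike.coe this) x
  have hker : ∀ y, h (f y) ∈ LinearMap.range i := by
    intro y
    rw [hexact, LinearMap.mem_ker, hph]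
    have : f y ∈ LinearMap.ker g := hfg ▸ LinearMap.mem_range_self f y
    exact this
  let ei : QtZt ≃ₗ[R] LinearMap.range i := LinearEquiv.ofInjective i hi
  let φ : (Fin k → R) →ₗ[R] QtZt :=
    ei.symm.toLinearMap ∘ₗ ((h ∘ₗ f).codRestrict (LinearMap.range i) hker)
  have hiφ : ∀ y, i (φ y) = h (f y) := by
    intro y
    have := congrArg Subtype.val (ei.apply_symm_apply ⟨h (f y), hker y⟩)
    simpa [ei, LinearEquiv.ofInjective_apply, φ] using this
  -- lift φ to ℚ[t]
  let mkQ := (LinearMap.range (Algebra.linearMap R (Polynomial ℚ))).mkQ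
  choose q hq using fun j => Submodule.mkQ_surjective _ (φ (b1 j))
  let φ' : (Fin k → R) →ₗ[R] Polynomial ℚ := b1.constr ℕ q
  have hφ' : ∀ y, mkQ (φ' y) = φ y := by
    intro y
    have : mkQ ∘ₗ φ' = φ := b1.ext fun j => by simp [φ', hq j]; exact hq j
    exact congrFun (congrArg DFunLike.coe this) y
  -- g' : F0 → F1 with f (g' x) = 2^n • x
  have hmem : ∀ x : Fin l → R, (2 : R) ^ n • x ∈ LinearMap.range f := by
    intro x
    rw [hfg, LinearMap.mem_ker, map_smul]
    exact hexp (g x)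
  let ef : (Fin k → R) ≃ₗ[R] LinearMap.range f := LinearEquiv.ofInjective f hf
  let g' : (Fin l → R) →ₗ[R] (Fin k → R) :=
    ef.symm.toLinearMap ∘ₗ (((2 : R) ^ n • LinearMap.id).codRestrict (LinearMap.range f) hmem)
  have hfg' : ∀ x, f (g' x) = (2 : R) ^ n • x := by
    intro x
    have := congrArg Subtype.val (ef.apply_symm_apply ⟨(2 : R) ^ n • x, hmem x⟩)
    simpa [ef, LinearEquiv.ofInjective_apply, g'] using this
  have hg'f : ∀ y, g' (f y) = (2 : R) ^ n • y := by
    intro y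
    apply hf
    rw [hfg', map_smul]
  -- division by 2^n
  let c : Polynomial ℚ →ₗ[R] Polynomial ℚ :=
    ((Polynomial.C (((2 : ℚ) ^ n)⁻¹)) •
      (LinearMap.id : Polynomial ℚ →ₗ[Polynomial ℚ] Polynomial ℚ)).restrictScalars R
  have hc : ∀ x : Polynomial ℚ, c ((2 : R) ^ n • x) = x := by
    intro x
    have h2 : ((2 : R) ^ n • x) = Polynomial.C ((2 : ℚ) ^ n) * x := by
      rw [Algebra.smul_def]
      congr 1
      show Polynomial.mapRingHom (Int.castRingHom ℚ) ((2 : R) ^ n) = _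
      rw [map_pow, map_ofNat, show (2:Polynomial ℚ) = Polynomial.C 2 from (map_ofNat Polynomial.C 2).symm, Polynomial.C_pow]
    simp only [c, h2, LinearMap.restrictScalars_apply, LinearMap.smul_apply, LinearMap.id_apply,
      smul_eq_mul, ← mul_assoc, ← Polynomial.C_mul, inv_mul_cancel₀ (by positivity : (2:ℚ)^n ≠ 0),
      Polynomial.C_1, one_mul]
  let ψ : (Fin l → R) →ₗ[R] QtZt := mkQ ∘ₗ c ∘ₗ φ' ∘ₗ g'
  have hψf : ∀ y, ψ (f y) = φ y := by
    intro y
    simp only [ψ, LinearMap.comp_apply, hg'f, map_smul, hc, hφ']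
  -- corrected lift
  let h' : (Fin l → R) →ₗ[R] E := h - i ∘ₗ ψ
  have hh'f : ∀ y, h' (f y) = 0 := by
    intro y
    simp [h', hψf, hiφ]
  have hsub : LinearMap.ker g ≤ LinearMap.ker h' := by
    intro x hx
    rw [← hfg] at hx
    obtain ⟨y, rfl⟩ := hx
    exact hh'f y
  let eq := LinearMap.quotKerEquivOfSurjective g hg
  have heq : ∀ x, eq (Submodule.Quotient.mk x) = g x := by
    intro x
    simp [eq, LinearMap.quotKerEquivOfSurjective, LinearMap.quotKerEquivRange]
  let s : M →ₗ[R] E := (LinearMap.ker g).liftQ h' hsub ∘ₗ eq.symm.toLinearMap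
  have hs : ∀ x, s (g x) = h' x := by
    intro x
    have : eq.symm (g x) = Submodule.Quotient.mk x := by
      apply eq.injective
      rw [eq.apply_symm_apply, heq]
    simp [s, this]
  refine ⟨s, ?_⟩
  ext m
  obtain ⟨x, rfl⟩ := hg m
  have hik : i (ψ x) ∈ LinearMap.ker p := hexact ▸ LinearMap.mem_range_self i (ψ x)
  simp [hs, h', hph, LinearMap.mem_ker.mp hik]
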